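/- Let f be the exponential generating function of the Catalan numbers. Then t·(f'(t)/f(t)) tends to −1/2 as t → −∞. -/

import Mathlib

open Real Filter MeasureTheory Set intervalIntegral
open scoped Topology

noncomputable def semi (x : ℝ) : ℝ := Real.sqrt (4 - x^2)

@[continuity, fun_prop]
lemma semi_cont : Continuous semi := by
  unfold semi; fun_prop

lemma semi_nonneg (x : ℝ) : 0 ≤ semi x := Real.sqrt_nonneg _

lemma semi_le_two (x : ℝ) : semi x ≤ 2 := by
  rw [show (2:ℝ) = Real.sqrt 4 by rw [show (4:ℝ) = 2^2 by norm_num, Real.sqrt_sq]; norm_num]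
  exact Real.sqrt_le_sqrt (by nlinarith [sq_nonneg x])

lemma hasDerivAt_h (y : ℝ) :
    HasDerivAt (fun y : ℝ => y * Real.sqrt y) (3/2 * Real.sqrt y) y := by
  rcases lt_trichotomy y 0 with hy | hy | hy
  · have : (fun y : ℝ => y * Real.sqrt y) =ᶠ[nhds y] fun _ => 0 := by
      filter_upwards [Iio_mem_nhds hy] with z hz
      simp [Real.sqrt_eq_zero_of_nonpos (le_of_lt hz)]
    rw [show 3/2 * Real.sqrt y = 0 by simp [Real.sqrt_eq_zero_of_nonpos hy.le]]
    exact (hasDerivAt_const y (0:ℝ)).congr_of_eventuallyEq this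
  · subst hy
    rw [hasDerivAt_iff_tendsto_slope]
    have h1 : ∀ z : ℝ, z ≠ 0 → slope (fun y : ℝ => y * Real.sqrt y) 0 z = Real.sqrt z := by
      intro z hz
      simp [slope, hz, mul_comm, mul_div_assoc, div_self hz]
    have h2 : Tendsto Real.sqrt (nhdsWithin 0 {(0:ℝ)}ᶜ) (nhds 0) := by
      have := (continuous_sqrt.tendsto 0)
      rw [Real.sqrt_zero] at this
      exact this.mono_left nhdsWithin_le_nhds
    simp only [Real.sqrt_zero, mul_zero]
    refine h2.congr' ?_
    filter_upwards [self_mem_nhdsWithin] with z hz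
    exact (h1 z hz).symm
  · have hd := (Real.hasDerivAt_sqrt (ne_of_gt hy))
    have := (hasDerivAt_id y).mul hd
    refine this.congr_deriv ?_
    have hs : Real.sqrt y ≠ 0 := by positivity
    rw [one_mul, id]
    field_simp
    nlinarith [Real.sq_sqrt hy.le, Real.sqrt_nonneg y]

lemma hasDerivAt_v (x : ℝ) :
    HasDerivAt (fun x : ℝ => (4 - x^2) * semi x) (-3*x * semi x) x := by
  have hinner : HasDerivAt (fun x : ℝ => 4 - x^2) (-(2*x)) x := by
    simpa using ((hasDerivAt_pow 2 x).const_sub 4)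
  have := (hasDerivAt_h (4 - x^2)).comp x hinner
  refine this.congr_deriv ?_
  unfold semi; ring
noncomputable def J (n : ℕ) : ℝ := ∫ x in (-2:ℝ)..2, x^(2*n) * semi x

lemma J_zero : J 0 = 2 * π := by
  unfold J
  simp only [Nat.mul_zero, pow_zero, one_mul]
  have h := intervalIntegral.smul_integral_comp_mul_left (a := (-1:ℝ)) (b := 1) semi 2
  have h2 : ∀ u : ℝ, semi (2*u) = 2 * Real.sqrt (1 - u^2) := by
    intro u
    unfold semi
    rw [show 4 - (2*u)^2 = 4 * (1 - u^2) by ring, Real.sqrt_mul (by norm_num),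
      show Real.sqrt 4 = 2 by rw [show (4:ℝ) = 2^2 by norm_num, Real.sqrt_sq]; norm_num]
  rw [show (2:ℝ) * (-1) = -2 by norm_num, show (2:ℝ) * 1 = 2 by norm_num] at h
  rw [← h]
  simp only [h2, smul_eq_mul]
  rw [intervalIntegral.integral_const_mul, integral_sqrt_one_sub_sq]
  ring

lemma catalan_rec (n : ℕ) : (n+2) * catalan (n+1) = 2 * (2*n+1) * catalan n := by
  have h1 := succ_mul_catalan_eq_centralBinom (n+1)
  have h2 := Nat.succ_mul_centralBinom_succ n
  have h3 := succ_mul_catalan_eq_centralBinom n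
  have key : (n+1) * ((n+2) * catalan (n+1)) = (n+1) * (2 * (2*n+1) * catalan n) := by
    rw [h1]
    calc (n+1) * Nat.centralBinom (n+1) = 2 * (2*n+1) * Nat.centralBinom n := h2
    _ = 2 * (2*n+1) * ((n+1) * catalan n) := by rw [h3]
    _ = (n+1) * (2 * (2*n+1) * catalan n) := by ring
  exact Nat.eq_of_mul_eq_mul_left (Nat.succ_pos n) key

lemma J_succ (n : ℕ) : (2*(n:ℝ)+4) * J (n+1) = 4*(2*n+1) * J n := by
  have hibp := intervalIntegral.integral_mul_deriv_eq_deriv_mul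
    (u := fun x : ℝ => x^(2*n+1)) (u' := fun x : ℝ => (2*(n:ℝ)+1) * x^(2*n))
    (v := fun x : ℝ => -(1/3) * ((4 - x^2) * semi x)) (v' := fun x : ℝ => x * semi x)
    (a := (-2:ℝ)) (b := 2)
    (fun x _ => by simpa using (hasDerivAt_pow (2*n+1) x))
    (fun x _ => by
      have := (hasDerivAt_v x).const_mul (-(1/3) : ℝ)
      convert this using 1
      ring)
    (by apply Continuous.intervalIntegrable; fun_prop)
    (by apply Continuous.intervalIntegrable; exact (continuous_id.mul semi_cont))
  have hsemi2 : semi 2 = 0 := by unfold semi; norm_num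
  have hsemin2 : semi (-2) = 0 := by
    unfold semi; rw [show 4 - (-2:ℝ)^2 = 0 by norm_num, Real.sqrt_zero]
  simp only [hsemi2, hsemin2, mul_zero, zero_mul, sub_zero, zero_sub] at hibp
  -- hibp : ∫ x in -2..2, x^(2n+1) * (x * semi x) = -∫ x in -2..2, (2n+1)x^(2n) * (-(1/3)*((4-x^2)*semi x))
  have lhs_eq : (∫ x in (-2:ℝ)..2, x^(2*n+1) * (x * semi x)) = J (n+1) := by
    unfold J
    congr 1 with x
    rw [show 2*(n+1) = 2*n+1+1 by ring]
    ring
  have rhs_eq : (∫ x in (-2:ℝ)..2, (2*(n:ℝ)+1) * x^(2*n) * (-(1/3) * ((4 - x^2) * semi x)))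
      = -((2*(n:ℝ)+1)/3) * (4 * J n - J (n+1)) := by
    have : ∀ x : ℝ, (2*(n:ℝ)+1) * x^(2*n) * (-(1/3) * ((4 - x^2) * semi x))
        = -((2*(n:ℝ)+1)/3) * (4 * (x^(2*n) * semi x) - (x^(2*(n+1)) * semi x)) := by
      intro x
      rw [show 2*(n+1) = 2*n + 2 by ring]
      ring
    have h4 : IntervalIntegrable (fun x : ℝ => 4 * (x^(2*n) * semi x)) volume (-2) 2 :=
      (continuous_const.mul ((continuous_pow _).mul semi_cont)).intervalIntegrable _ _
    have h5 : IntervalIntegrable (fun x : ℝ => x^(2*(n+1)) * semi x) volume (-2) 2 :=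
      ((continuous_pow _).mul semi_cont).intervalIntegrable _ _
    rw [intervalIntegral.integral_congr (fun x _ => this x),
      intervalIntegral.integral_const_mul, intervalIntegral.integral_sub h4 h5,
      intervalIntegral.integral_const_mul]
    rfl
  rw [lhs_eq, rhs_eq] at hibp
  -- hibp : J (n+1) = -(-( (2n+1)/3) * (4*J n - J (n+1)))
  have : J (n+1) = ((2*(n:ℝ)+1)/3) * (4 * J n - J (n+1)) := by linarith [hibp]
  field_simp at this
  linarith

lemma J_eq (n : ℕ) : J n = 2 * π * catalan n := by
  induction n with
  | zero => simp [J_zero]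
  | succ n ih =>
    have h1 := J_succ n
    have h2 := catalan_rec n
    have h2' : ((n:ℝ)+2) * (catalan (n+1) : ℝ) = 2 * (2*n+1) * (catalan n : ℝ) := by
      exact_mod_cast congrArg (fun k : ℕ => (k : ℝ)) h2
    have hne : (2*(n:ℝ)+4) ≠ 0 := by positivity
    have : (2*(n:ℝ)+4) * J (n+1) = (2*(n:ℝ)+4) * (2 * π * catalan (n+1)) := by
      rw [h1, ih]
      linear_combination (-4*π) * h2'
    exact mul_left_cancel₀ hne this
open scoped Nat

/-- The exponential generating function of the Catalan numbers. -/
noncomputable def catalanEGF (t : ℝ) : ℝ := ∑' n : ℕ, (catalan n : ℝ) * t ^ n / n !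

lemma exp_tsum (y : ℝ) : Real.exp y = ∑' n : ℕ, y ^ n / n ! := by
  rw [Real.exp_eq_exp_ℝ, NormedSpace.exp_eq_tsum_div]

lemma egf_eq (t : ℝ) :
    catalanEGF t = (1/(2*π)) * ∫ x in (-2:ℝ)..2, Real.exp (t*x^2) * semi x := by
  set μ : Measure ℝ := volume.restrict (Ioc (-2:ℝ) 2) with hμ
  set f : ℕ → ℝ → ℝ := fun n x => (t^n / n !) * (x^(2*n) * semi x) with hf
  have hpt : ∀ x : ℝ, Real.exp (t*x^2) * semi x = ∑' n : ℕ, f n x := by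
    intro x
    rw [exp_tsum, ← tsum_mul_right]
    congr 1 with n
    rw [hf]
    simp only [mul_pow, pow_mul]
    ring
  have hmeas : ∀ n : ℕ, AEStronglyMeasurable (f n) μ := fun n =>
    Continuous.aestronglyMeasurable (continuous_const.mul ((continuous_pow _).mul semi_cont))
  have hnorm : ∀ n : ℕ, ∀ x ∈ Ioc (-2:ℝ) 2, ‖f n x‖ ≤ (4*|t|)^n / n ! * 2 := by
    intro n x hx
    have hx2 : x^2 ≤ 4 := by rcases hx with ⟨h1, h2⟩; nlinarith
    have heq : ‖f n x‖ = |t|^n / n ! * (|x|^(2*n) * semi x) := by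
      rw [hf]
      simp [abs_mul, abs_div, abs_pow, Nat.abs_cast, abs_of_nonneg (semi_nonneg x),
        Real.norm_eq_abs]
    rw [heq, show (4*|t|)^n / n ! * 2 = |t|^n / n ! * (4^n * 2) by rw [mul_pow]; ring]
    gcongr
    all_goals first
      | exact semi_le_two x
      | exact semi_nonneg x
      | (rw [pow_mul, sq_abs]; exact pow_le_pow_left₀ (sq_nonneg x) hx2 n)
  have hsummable : Summable (fun n : ℕ => (4*|t|)^n / n ! * 2 * 4) :=
    ((Real.summable_pow_div_factorial _).mul_right 2).mul_right 4
  have hlint : ∀ n : ℕ, ∫⁻ x, ‖f n x‖₊ ∂μ ≤ ENNReal.ofReal ((4*|t|)^n / n ! * 2 * 4) := by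
    intro n
    have h1 : ∫⁻ x, ‖f n x‖₊ ∂μ ≤ ∫⁻ _, ENNReal.ofReal ((4*|t|)^n / n ! * 2) ∂μ := by
      apply lintegral_mono_ae
      filter_upwards [ae_restrict_mem measurableSet_Ioc] with x hx
      change ‖f n x‖ₑ ≤ _
      rw [← ofReal_norm]
      exact ENNReal.ofReal_le_ofReal (hnorm n x hx)
    have h2 : (∫⁻ _, ENNReal.ofReal ((4*|t|)^n / n ! * 2) ∂μ)
        = ENNReal.ofReal ((4*|t|)^n / n ! * 2) * ENNReal.ofReal 4 := by
      rw [lintegral_const, hμ, Measure.restrict_apply_univ, Real.volume_Ioc]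
      norm_num
    refine h1.trans ?_
    rw [h2, ← ENNReal.ofReal_mul (by positivity)]
  have hsum : (∑' n : ℕ, ∫⁻ x, ‖f n x‖₊ ∂μ) ≠ ⊤ := by
    apply ne_top_of_le_ne_top ?_ (ENNReal.tsum_le_tsum hlint)
    rw [← ENNReal.ofReal_tsum_of_nonneg (fun n => by positivity) hsummable]
    exact ENNReal.ofReal_ne_top
  have hswap := MeasureTheory.integral_tsum hmeas hsum
  have hI : ∀ n : ℕ, (∫ x, f n x ∂μ) = t^n / n ! * (2*π*catalan n) := by
    intro n
    rw [hf]
    simp only []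
    rw [MeasureTheory.integral_const_mul]
    congr 1
    have hJ : (∫ x, x^(2*n) * semi x ∂μ) = J n := by
      rw [hμ, J, intervalIntegral.integral_of_le (by norm_num : (-2:ℝ) ≤ 2)]
    rw [hJ, J_eq n]
  calc catalanEGF t = ∑' n : ℕ, (catalan n : ℝ) * t^n / n ! := rfl
    _ = ∑' n : ℕ, (1/(2*π)) * (t^n / n ! * (2*π*catalan n)) := by
        refine tsum_congr fun n => ?_
        field_simp
    _ = (1/(2*π)) * ∑' n : ℕ, (t^n / n ! * (2*π*catalan n)) := tsum_mul_left
    _ = (1/(2*π)) * ∑' n : ℕ, ∫ x, f n x ∂μ := by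
        congr 1
        exact tsum_congr fun n => (hI n).symm
    _ = (1/(2*π)) * ∫ x, ∑' n, f n x ∂μ := by rw [hswap]
    _ = (1/(2*π)) * ∫ x, Real.exp (t*x^2) * semi x ∂μ := by
        congr 1
        exact integral_congr_ae (Eventually.of_forall fun x => (hpt x).symm)
    _ = (1/(2*π)) * ∫ x in (-2:ℝ)..2, Real.exp (t*x^2) * semi x := by
        rw [intervalIntegral.integral_of_le (by norm_num : (-2:ℝ) ≤ 2)]
lemma I0_pos (t : ℝ) : 0 < ∫ x in (-2:ℝ)..2, Real.exp (t*x^2) * semi x := by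
  apply intervalIntegral_pos_of_pos_on
  · apply Continuous.intervalIntegrable
    fun_prop
  · intro x hx
    apply mul_pos (Real.exp_pos _)
    apply Real.sqrt_pos.mpr
    rcases hx with ⟨h1, h2⟩
    nlinarith
  · norm_num

lemma hasDerivAt_egf (t : ℝ) :
    HasDerivAt catalanEGF
      ((1/(2*π)) * ∫ x in (-2:ℝ)..2, x^2 * Real.exp (t*x^2) * semi x) t := by
  set μ : Measure ℝ := volume.restrict (Ioc (-2:ℝ) 2) with hμ
  have heq : catalanEGF = fun u => (1/(2*π)) * ∫ x, Real.exp (u*x^2) * semi x ∂μ := by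
    funext u
    rw [egf_eq u, intervalIntegral.integral_of_le (by norm_num : (-2:ℝ) ≤ 2)]
  have hcont : ∀ u : ℝ, Continuous (fun x : ℝ => Real.exp (u*x^2) * semi x) := by
    intro u; fun_prop
  have hcont' : Continuous (fun x : ℝ => x^2 * Real.exp (t*x^2) * semi x) := by fun_prop
  have key := _root_.hasDerivAt_integral_of_dominated_loc_of_deriv_le (μ := μ)
    (F := fun u x => Real.exp (u*x^2) * semi x)
    (F' := fun u x => x^2 * Real.exp (u*x^2) * semi x)
    (x₀ := t) (s := Metric.ball t 1) (bound := fun _ => 8 * Real.exp (4*(|t|+1)))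
    (Metric.ball_mem_nhds t one_pos)
    (Eventually.of_forall fun u => (hcont u).aestronglyMeasurable)
    (by
      rw [hμ]
      exact ((hcont t).integrableOn_Ioc))
    (hcont'.aestronglyMeasurable)
    (by
      rw [hμ]
      refine (ae_restrict_mem measurableSet_Ioc).mono fun x hx => fun u hu => ?_
      have hx2 : x^2 ≤ 4 := by rcases hx with ⟨h1, h2⟩; nlinarith
      have hu' : |u| ≤ |t| + 1 := by
        have := mem_ball_iff_norm.mp hu
        rw [Real.norm_eq_abs] at this
        have := abs_sub_abs_le_abs_sub u t
        linarith
      have hexp : Real.exp (u*x^2) ≤ Real.exp (4*(|t|+1)) := by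
        apply Real.exp_le_exp.mpr
        calc u*x^2 ≤ |u| * x^2 := by
              apply mul_le_mul_of_nonneg_right (le_abs_self u) (sq_nonneg x)
          _ ≤ (|t|+1) * 4 := by
              apply mul_le_mul hu' hx2 (sq_nonneg x) (by positivity)
          _ = 4*(|t|+1) := by ring
      have : ‖x^2 * Real.exp (u*x^2) * semi x‖ = x^2 * Real.exp (u*x^2) * semi x := by
        rw [Real.norm_eq_abs, abs_of_nonneg]
        exact mul_nonneg (mul_nonneg (sq_nonneg x) (Real.exp_pos _).le) (semi_nonneg x)
      rw [this]
      calc x^2 * Real.exp (u*x^2) * semi x ≤ 4 * Real.exp (4*(|t|+1)) * 2 := by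
            apply mul_le_mul _ (semi_le_two x) (semi_nonneg x) (by positivity)
            exact mul_le_mul hx2 hexp (Real.exp_pos _).le (by norm_num)
        _ = 8 * Real.exp (4*(|t|+1)) := by ring)
    (by
      rw [hμ]
      exact integrableOn_const measure_Ioc_lt_top.ne)
    (Eventually.of_forall fun x => fun u _ => by
      have h1 : HasDerivAt (fun u : ℝ => u * x^2) (x^2) u := by
        simpa using (hasDerivAt_id u).mul_const (x^2)
      have := (h1.exp).mul_const (semi x)
      refine this.congr_deriv ?_
      ring)
  rw [heq]
  have := key.2.const_mul (1/(2*π))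
  refine this.congr_deriv ?_
  rw [hμ, intervalIntegral.integral_of_le (by norm_num : (-2:ℝ) ≤ 2)]

lemma deriv_egf (t : ℝ) :
    deriv catalanEGF t = (1/(2*π)) * ∫ x in (-2:ℝ)..2, x^2 * Real.exp (t*x^2) * semi x :=
  (hasDerivAt_egf t).deriv
lemma gauss_int : (∫ x : ℝ, Real.exp (-x^2)) = Real.sqrt π := by
  have := integral_gaussian 1
  simpa using this

lemma gauss_sq_int : (∫ x : ℝ, x^2 * Real.exp (-x^2)) = Real.sqrt π / 2 := by
  have h2ca := integral_comp_abs (f := fun y : ℝ => y^2 * Real.exp (-y^2))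
  simp only [sq_abs] at h2ca
  rw [h2ca]
  have hr : ∀ x : ℝ, x ^ (2:ℝ) = x ^ (2:ℕ) := fun x => by
    rw [show (2:ℝ) = ((2:ℕ):ℝ) by norm_num, Real.rpow_natCast]
  have h2 := integral_rpow_mul_exp_neg_rpow (p := 2) (q := 2) (by norm_num) (by norm_num)
  have h3 : (∫ x in Ioi (0:ℝ), x ^ (2:ℝ) * Real.exp (-x ^ (2:ℝ)))
      = ∫ x in Ioi (0:ℝ), x^2 * Real.exp (-x^2) := by
    refine setIntegral_congr_fun measurableSet_Ioi fun x _ => ?_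
    rw [hr x]
  rw [h3] at h2
  rw [h2]
  rw [show ((2:ℝ)+1)/2 = 1/2 + 1 by norm_num, Real.Gamma_add_one (by norm_num),
    Real.Gamma_one_half_eq]
  ring

lemma tendsto_aux (phi : ℝ → ℝ) (hphi : Continuous phi) (hphin : ∀ u, 0 ≤ phi u)
    (hint : Integrable (fun u : ℝ => phi u * Real.exp (-u^2) * 2)) :
    Tendsto (fun s : ℝ => ∫ u in (-(2*Real.sqrt s))..(2*Real.sqrt s),
        phi u * Real.exp (-u^2) * Real.sqrt (4 - u^2/s)) atTop
      (𝓝 (∫ u : ℝ, phi u * Real.exp (-u^2) * 2)) := by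
  have hF : ∀ s : ℝ, (∫ u in (-(2*Real.sqrt s))..(2*Real.sqrt s),
      phi u * Real.exp (-u^2) * Real.sqrt (4 - u^2/s))
      = ∫ u : ℝ, (Ioc (-(2*Real.sqrt s)) (2*Real.sqrt s)).indicator
          (fun u => phi u * Real.exp (-u^2) * Real.sqrt (4 - u^2/s)) u := by
    intro s
    rw [intervalIntegral.integral_of_le (neg_le_self (by positivity)), ← MeasureTheory.integral_indicator
      measurableSet_Ioc]
  simp only [hF]
  apply MeasureTheory.tendsto_integral_filter_of_dominated_convergence
    (bound := fun u : ℝ => phi u * Real.exp (-u^2) * 2)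
  · filter_upwards with s
    apply AEStronglyMeasurable.indicator _ measurableSet_Ioc
    apply Continuous.aestronglyMeasurable
    fun_prop
  · filter_upwards [eventually_gt_atTop (0:ℝ)] with s hs
    filter_upwards with u
    refine (norm_indicator_le_norm_self _ _).trans ?_
    rw [Real.norm_eq_abs, abs_mul, abs_mul, abs_of_nonneg (hphin u), abs_of_nonneg
      (Real.exp_pos _).le, abs_of_nonneg (Real.sqrt_nonneg _)]
    have : Real.sqrt (4 - u^2/s) ≤ 2 := by
      rw [show (2:ℝ) = Real.sqrt 4 by
        rw [show (4:ℝ) = 2^2 by norm_num, Real.sqrt_sq]; norm_num]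
      apply Real.sqrt_le_sqrt
      have : 0 ≤ u^2/s := by positivity
      linarith
    gcongr
    exact mul_nonneg (hphin u) (Real.exp_pos _).le
  · exact hint
  · filter_upwards with u
    have hmem : ∀ᶠ s : ℝ in atTop, u ∈ Ioc (-(2*Real.sqrt s)) (2*Real.sqrt s) := by
      filter_upwards [eventually_ge_atTop (u^2+1)] with s hs
      have hs0 : (0:ℝ) < s := by nlinarith [sq_nonneg u]
      have habs : |u| < Real.sqrt s := by
        rw [← Real.sqrt_sq_eq_abs]
        exact Real.sqrt_lt_sqrt (sq_nonneg u) (by linarith)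
      have h1 : 0 < Real.sqrt s := Real.sqrt_pos.mpr hs0
      constructor
      · nlinarith [neg_abs_le u]
      · nlinarith [le_abs_self u]
    have hlim : Tendsto (fun s : ℝ => phi u * Real.exp (-u^2) * Real.sqrt (4 - u^2/s)) atTop
        (𝓝 (phi u * Real.exp (-u^2) * 2)) := by
      have h4 : Tendsto (fun s : ℝ => 4 - u^2/s) atTop (𝓝 4) := by
        have := Tendsto.div_atTop (tendsto_const_nhds (x := u^2)) tendsto_id
        simpa using tendsto_const_nhds.sub this
      have := h4.sqrt
      rw [show Real.sqrt 4 = 2 by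
        rw [show (4:ℝ) = 2^2 by norm_num, Real.sqrt_sq]; norm_num] at this
      exact this.const_mul _
    refine hlim.congr' ?_
    filter_upwards [hmem] with s hs
    rw [indicator_of_mem hs]
lemma scaling_a {s : ℝ} (hs : 0 < s) :
    Real.sqrt s * ∫ x in (-2:ℝ)..2, Real.exp (-s*x^2) * semi x
      = ∫ u in (-(2*Real.sqrt s))..(2*Real.sqrt s),
          Real.exp (-u^2) * Real.sqrt (4 - u^2/s) := by
  have h := intervalIntegral.smul_integral_comp_mul_left (a := (-2:ℝ)) (b := 2)
    (fun u : ℝ => Real.exp (-u^2) * Real.sqrt (4 - u^2/s)) (Real.sqrt s)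
  have hG : ∀ x : ℝ, Real.exp (-(Real.sqrt s*x)^2) * Real.sqrt (4 - (Real.sqrt s*x)^2/s)
      = Real.exp (-s*x^2) * semi x := by
    intro x
    rw [mul_pow, Real.sq_sqrt hs.le, mul_div_cancel_left₀ _ hs.ne']
    unfold semi
    rw [neg_mul]
  simp only [hG, smul_eq_mul] at h
  rw [show Real.sqrt s * (-2) = -(2*Real.sqrt s) by ring,
    show Real.sqrt s * 2 = 2*Real.sqrt s by ring] at h
  exact h

lemma scaling_b {s : ℝ} (hs : 0 < s) :
    Real.sqrt s * (s * ∫ x in (-2:ℝ)..2, x^2 * Real.exp (-s*x^2) * semi x)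
      = ∫ u in (-(2*Real.sqrt s))..(2*Real.sqrt s),
          u^2 * Real.exp (-u^2) * Real.sqrt (4 - u^2/s) := by
  have h := intervalIntegral.smul_integral_comp_mul_left (a := (-2:ℝ)) (b := 2)
    (fun u : ℝ => u^2 * Real.exp (-u^2) * Real.sqrt (4 - u^2/s)) (Real.sqrt s)
  have hG : ∀ x : ℝ, (Real.sqrt s*x)^2 * Real.exp (-(Real.sqrt s*x)^2)
      * Real.sqrt (4 - (Real.sqrt s*x)^2/s)
      = s * (x^2 * Real.exp (-s*x^2) * semi x) := by
    intro x
    rw [mul_pow, Real.sq_sqrt hs.le, mul_div_cancel_left₀ _ hs.ne']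
    unfold semi
    rw [neg_mul]
    ring
  simp only [hG, smul_eq_mul] at h
  rw [show Real.sqrt s * (-2) = -(2*Real.sqrt s) by ring,
    show Real.sqrt s * 2 = 2*Real.sqrt s by ring,
    intervalIntegral.integral_const_mul] at h
  rw [← h]

lemma tendsto_D : Tendsto (fun s : ℝ =>
      Real.sqrt s * ∫ x in (-2:ℝ)..2, Real.exp (-s*x^2) * semi x) atTop
    (𝓝 (2 * Real.sqrt π)) := by
  have haux := tendsto_aux (fun _ => 1) continuous_const (fun _ => zero_le_one)
    (by simpa using ((integrable_exp_neg_mul_sq one_pos).const_mul 1).mul_const 2)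
  simp only [one_mul] at haux
  have hval : (∫ u : ℝ, Real.exp (-u^2) * 2) = 2 * Real.sqrt π := by
    rw [MeasureTheory.integral_mul_const, gauss_int]
    ring
  rw [hval] at haux
  refine haux.congr' ?_
  filter_upwards [eventually_gt_atTop (0:ℝ)] with s hs
  exact (scaling_a hs).symm

lemma integrable_sq_gauss : Integrable (fun u : ℝ => u^2 * Real.exp (-u^2) * 2) := by
  have h := integrable_rpow_mul_exp_neg_mul_sq (b := 1) one_pos (s := 2) (by norm_num)
  have heq : (fun u : ℝ => u^2 * Real.exp (-u^2) * 2)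
      = fun u : ℝ => (u ^ (2:ℝ) * Real.exp (-1 * u^2)) * 2 := by
    funext u
    rw [show (2:ℝ) = ((2:ℕ):ℝ) by norm_num, Real.rpow_natCast, neg_one_mul]
  rw [heq]
  exact h.mul_const 2

lemma tendsto_N : Tendsto (fun s : ℝ =>
      Real.sqrt s * (s * ∫ x in (-2:ℝ)..2, x^2 * Real.exp (-s*x^2) * semi x)) atTop
    (𝓝 (Real.sqrt π)) := by
  have haux := tendsto_aux (fun u => u^2) (continuous_pow 2) (fun u => sq_nonneg u)
    integrable_sq_gauss
  have hval : (∫ u : ℝ, u^2 * Real.exp (-u^2) * 2) = Real.sqrt π := by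
    rw [MeasureTheory.integral_mul_const, gauss_sq_int]
    ring
  rw [hval] at haux
  refine haux.congr' ?_
  filter_upwards [eventually_gt_atTop (0:ℝ)] with s hs
  exact (scaling_b hs).symm

/-- For the exponential generating function f of the Catalan numbers,
t·(f'(t)/f(t)) tends to −1/2 as t → −∞. -/
theorem catalan_egf_logderiv_tendsto_atBot :
    Filter.Tendsto (fun t : ℝ => t * (deriv catalanEGF t / catalanEGF t))
      Filter.atBot (nhds (-1 / 2)) := by
  have hsqrtpi : (0:ℝ) < Real.sqrt π := Real.sqrt_pos.mpr Real.pi_pos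
  have hratio : Tendsto (fun s : ℝ =>
      -((Real.sqrt s * (s * ∫ x in (-2:ℝ)..2, x^2 * Real.exp (-s*x^2) * semi x))
        / (Real.sqrt s * ∫ x in (-2:ℝ)..2, Real.exp (-s*x^2) * semi x))) atTop
      (𝓝 (-1/2)) := by
    have h := (tendsto_N.div tendsto_D (by positivity)).neg
    have hv : -(Real.sqrt π / (2*Real.sqrt π)) = -1/2 := by
      have h12 : Real.sqrt π / (2*Real.sqrt π) = 1/2 := by
        rw [div_eq_div_iff (by positivity) (by norm_num : (2:ℝ) ≠ 0)]
        ring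
      rw [h12]
      norm_num
    rw [hv] at h
    exact h.congr (fun s => by simp [Pi.div_apply])
  have hcomp := hratio.comp tendsto_neg_atBot_atTop
  refine hcomp.congr' ?_
  filter_upwards [eventually_lt_atBot (0:ℝ)] with t ht
  set s : ℝ := -t with hsdef
  have hs : 0 < s := by rw [hsdef]; linarith
  have hts : t = -s := by rw [hsdef]; ring
  have hexp_eq : ∀ x : ℝ, Real.exp (-s*x^2) = Real.exp (t*x^2) := by
    intro x
    rw [hts]
  have hI0 : (∫ x in (-2:ℝ)..2, Real.exp (-s*x^2) * semi x)
      = ∫ x in (-2:ℝ)..2, Real.exp (t*x^2) * semi x := by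
    refine intervalIntegral.integral_congr fun x _ => ?_
    rw [hexp_eq]
  have hI2 : (∫ x in (-2:ℝ)..2, x^2 * Real.exp (-s*x^2) * semi x)
      = ∫ x in (-2:ℝ)..2, x^2 * Real.exp (t*x^2) * semi x := by
    refine intervalIntegral.integral_congr fun x _ => ?_
    rw [hexp_eq]
  have hI0pos := I0_pos t
  have hs' : (0:ℝ) < Real.sqrt s := Real.sqrt_pos.mpr hs
  simp only [Function.comp]
  rw [deriv_egf t, egf_eq t, hI0, hI2]
  set A := ∫ x in (-2:ℝ)..2, Real.exp (t*x^2) * semi x with hA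
  set B := ∫ x in (-2:ℝ)..2, x^2 * Real.exp (t*x^2) * semi x with hB
  have hc : (1/(2*π)) ≠ 0 := by
    have := Real.pi_pos
    positivity
  rw [mul_div_mul_left B A hc, mul_div_mul_left (s*B) A hs'.ne']
  rw [hts]
  ring
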